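/- The map (M,N) ↦ Tr[(√M − √N)²] = |√M − √N|_F² is jointly convex on pairs of symmetric positive semidefinite k×k matrices. -/

import Mathlib

open Matrix
open scoped Kronecker
set_option linter.unusedSectionVars false
set_option maxHeartbeats 1000000

/-- Squared Frobenius norm of a real k×k matrix. -/
noncomputable def frobSq {k : ℕ} (X : Matrix (Fin k) (Fin k) ℝ) : ℝ :=
  ∑ i, ∑ j, X i j ^ 2

open scoped ComplexOrder in
/-- The positive semidefinite square root of a positive semidefinite matrix -/
noncomputable def Matrix.PosSemidef.sqrt {n : Type*} [Fintype n] [DecidableEq n] {𝕜 : Type*}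
    [RCLike 𝕜] {A : Matrix n n 𝕜} (hA : A.PosSemidef) : Matrix n n 𝕜 :=
  hA.1.eigenvectorUnitary.1 * Matrix.diagonal ((↑) ∘ (√·) ∘ hA.1.eigenvalues) *
  (star hA.1.eigenvectorUnitary : Matrix n n 𝕜)

private lemma mul_pat {R : Type*} [Ring R] (U D S : R) (h : S * U = 1) :
    U * D * S * (U * D * S) = U * (D * D) * S := by
  calc U * D * S * (U * D * S) = U * D * (S * U) * D * S := by noncomm_ring
  _ = U * (D * D) * S := by rw [h, mul_one]; noncomm_ring

open scoped ComplexOrder in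
lemma Matrix.PosSemidef.posSemidef_sqrt {n : Type*} [Fintype n] [DecidableEq n] {𝕜 : Type*}
    [RCLike 𝕜] {A : Matrix n n 𝕜} (hA : A.PosSemidef) : hA.sqrt.PosSemidef := by
  unfold Matrix.PosSemidef.sqrt
  have hd : Matrix.PosSemidef (Matrix.diagonal (((↑) : ℝ → 𝕜) ∘ (√·) ∘ hA.1.eigenvalues)) :=
    Matrix.PosSemidef.diagonal fun i => by simp [Real.sqrt_nonneg]
  have := hd.mul_mul_conjTranspose_same (hA.1.eigenvectorUnitary : Matrix n n 𝕜)
  exact this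

open scoped ComplexOrder in
lemma Matrix.PosSemidef.sqrt_mul_self {n : Type*} [Fintype n] [DecidableEq n] {𝕜 : Type*}
    [RCLike 𝕜] {A : Matrix n n 𝕜} (hA : A.PosSemidef) : hA.sqrt * hA.sqrt = A := by
  unfold Matrix.PosSemidef.sqrt
  rw [mul_pat _ _ _ (Unitary.coe_star_mul_self _), Matrix.diagonal_mul_diagonal]
  conv_rhs => rw [hA.1.spectral_theorem, Unitary.conjStarAlgAut_apply]
  have hs : ∀ i, √(hA.1.eigenvalues i) * √(hA.1.eigenvalues i) = hA.1.eigenvalues i :=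
    fun i => Real.mul_self_sqrt (hA.eigenvalues_nonneg i)
  simp only [Function.comp_def, ← RCLike.ofReal_mul, hs]

private lemma psd_exists_eq_ct_mul_self {n : Type*} [Fintype n] [DecidableEq n]
    {A : Matrix n n ℝ} (hA : A.PosSemidef) : ∃ B : Matrix n n ℝ, A = Bᴴ * B :=
  ⟨hA.sqrt, by rw [hA.posSemidef_sqrt.1.eq, hA.sqrt_mul_self]⟩

section Helpers

variable {n m : Type*} [Fintype n] [DecidableEq n] [Fintype m] [DecidableEq m]

private lemma psd_smul' (t : ℝ) (ht : 0 ≤ t) {A : Matrix n n ℝ} (hA : A.PosSemidef) :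
    (t • A).PosSemidef := by
  refine PosSemidef.of_dotProduct_mulVec_nonneg ?_ fun x => ?_
  · unfold Matrix.IsHermitian
    rw [conjTranspose_smul, hA.1.eq, star_trivial]
  · rw [smul_mulVec, dotProduct_smul, smul_eq_mul]
    exact mul_nonneg ht (hA.dotProduct_mulVec_nonneg x)

private lemma kron_conjTranspose' (A : Matrix n n ℝ) (B : Matrix m m ℝ) :
    (A ⊗ₖ B)ᴴ = Aᴴ ⊗ₖ Bᴴ := by
  ext ⟨i,j⟩ ⟨p,q⟩
  simp [conjTranspose_apply, kroneckerMap_apply]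

private lemma psd_kron' {A : Matrix n n ℝ} {B : Matrix m m ℝ} (hA : A.PosSemidef)
    (hB : B.PosSemidef) : (A ⊗ₖ B).PosSemidef := by
  obtain ⟨P, hP⟩ := psd_exists_eq_ct_mul_self hA
  obtain ⟨Q, hQ⟩ := psd_exists_eq_ct_mul_self hB
  have : A ⊗ₖ B = (P ⊗ₖ Q)ᴴ * (P ⊗ₖ Q) := by
    rw [kron_conjTranspose', ← mul_kronecker_mul, hP, hQ]
  rw [this]
  exact posSemidef_conjTranspose_mul_self _

/-- If `W` is symmetric, `H` is PSD and `H² - W²` is PSD, then `H - W` is PSD. -/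
private lemma psd_of_sq_le' {W H : Matrix n n ℝ} (hW : W.IsHermitian) (hH : H.PosSemidef)
    (hle : (H * H - W * W).PosSemidef) : (H - W).PosSemidef := by
  have hHW : (H - W).IsHermitian := hH.1.sub hW
  apply hHW.posSemidef_iff_eigenvalues_nonneg.mpr
  intro i
  by_contra hneg
  push_neg at hneg
  set μ := hHW.eigenvalues i with hμ
  set v : n → ℝ := (WithLp.equiv 2 _) (hHW.eigenvectorBasis i) with hv
  have hev : (H - W) *ᵥ v = μ • v := hHW.mulVec_eigenvectorBasis i
  have hvnorm : ‖hHW.eigenvectorBasis i‖ = 1 := hHW.eigenvectorBasis.orthonormal.1 i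
  have hvv : v ⬝ᵥ v = 1 := by
    have h1 : ‖hHW.eigenvectorBasis i‖ ^ 2 = 1 := by rw [hvnorm]; norm_num
    rw [EuclideanSpace.norm_eq] at h1
    rw [Real.sq_sqrt (by positivity)] at h1
    simp [pow_two] at h1
    simp only [dotProduct]
    exact h1
  set a := v ⬝ᵥ H *ᵥ v with ha
  have haa : 0 ≤ a := by simpa using hH.dotProduct_mulVec_nonneg v
  have hWv : W *ᵥ v = H *ᵥ v - μ • v := by
    have : H *ᵥ v - W *ᵥ v = μ • v := by rw [← sub_mulVec]; exact hev
    linear_combination (norm := module) -this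
  have key : 0 ≤ μ * (2 * a - μ) := by
    have h0 : 0 ≤ v ⬝ᵥ (H * H - W * W) *ᵥ v := by simpa using hle.dotProduct_mulVec_nonneg v
    have hsplit : H * H - W * W = H * (H - W) + (H - W) * W := by noncomm_ring
    rw [hsplit] at h0
    rw [add_mulVec, dotProduct_add, ← mulVec_mulVec, ← mulVec_mulVec, hev] at h0
    have t1 : v ⬝ᵥ H *ᵥ (μ • v) = μ * a := by
      rw [mulVec_smul, dotProduct_smul, smul_eq_mul]
    have t2 : v ⬝ᵥ (H - W) *ᵥ (W *ᵥ v) = μ * (a - μ) := by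
      rw [dotProduct_mulVec v (H - W), ← mulVec_transpose]
      have hsym : (H - W)ᵀ = H - W := by
        have := hHW.eq
        rwa [conjTranspose_eq_transpose_of_trivial] at this
      rw [hsym, hev, smul_dotProduct, smul_eq_mul, hWv]
      rw [dotProduct_sub, dotProduct_smul, hvv, smul_eq_mul, mul_one]
    rw [t1, t2] at h0
    nlinarith [h0]
  nlinarith [key, haa, lt_of_lt_of_eq hneg (Pi.zero_apply i)]

/-- PSD plus a positive multiple of the identity is positive definite. -/
private lemma psd_add_smul_one_posDef {A : Matrix n n ℝ} (hA : A.PosSemidef) {ε : ℝ}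
    (hε : 0 < ε) : (A + ε • (1 : Matrix n n ℝ)).PosDef := by
  refine Matrix.PosDef.posSemidef_add hA (PosDef.of_dotProduct_mulVec_pos ?_ fun ⦃x⦄ hx => ?_)
  · unfold Matrix.IsHermitian
    rw [conjTranspose_smul, conjTranspose_one, star_trivial]
  · rw [smul_mulVec, dotProduct_smul, one_mulVec, smul_eq_mul]
    exact mul_pos hε (by simpa using dotProduct_star_self_pos_iff.mpr hx)

/-- PSD + invertible implies positive definite. -/
private lemma posDef_of_psd_isUnit {A : Matrix n n ℝ} (hA : A.PosSemidef)
    (h : IsUnit A.det) : A.PosDef := by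
  refine PosDef.of_dotProduct_mulVec_pos hA.1 fun ⦃x⦄ hx => lt_of_le_of_ne (hA.dotProduct_mulVec_nonneg x) fun heq => hx ?_
  have h0 : A *ᵥ x = 0 := (hA.dotProduct_mulVec_zero_iff x).mp heq.symm
  have : A⁻¹ *ᵥ (A *ᵥ x) = x := by
    rw [mulVec_mulVec, nonsing_inv_mul A h, one_mulVec]
  rw [h0, mulVec_zero] at this
  exact this.symm

private lemma psd_fromBlocks_diag {A : Matrix n n ℝ} {D : Matrix m m ℝ} (hA : A.PosSemidef)
    (hD : D.PosSemidef) : (fromBlocks A 0 0 D).PosSemidef := by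
  refine PosSemidef.of_dotProduct_mulVec_nonneg ?_ fun x => ?_
  · unfold Matrix.IsHermitian
    rw [fromBlocks_conjTranspose, hA.1.eq, hD.1.eq]
    simp
  · rw [fromBlocks_mulVec]
    simp only [zero_mulVec, add_zero, zero_add]
    have hs : star x = Sum.elim (star (x ∘ Sum.inl)) (star (x ∘ Sum.inr)) := by
      ext i; cases i <;> rfl
    rw [hs, sumElim_dotProduct_sumElim]
    exact add_nonneg (hA.dotProduct_mulVec_nonneg _) (hD.dotProduct_mulVec_nonneg _)

private lemma conj_quadform (G M : Matrix n n ℝ) (hG : Gᵀ = G) (v : n → ℝ) :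
    (G *ᵥ v) ⬝ᵥ M *ᵥ (G *ᵥ v) = v ⬝ᵥ (G * M * G) *ᵥ v := by
  rw [mul_assoc, ← mulVec_mulVec, ← mulVec_mulVec]
  rw [dotProduct_mulVec v G, ← mulVec_transpose, hG]

private lemma eps_limit {a b c d : ℝ} (hc : 0 ≤ c) (hd : 0 ≤ d)
    (h : ∀ ε : ℝ, 0 < ε → a ≤ b + ε * c + ε ^ 2 * d) : a ≤ b := by
  refine le_of_forall_pos_le_add fun δ hδ => ?_
  have hcd : (0:ℝ) < c + d + 1 := by linarith
  have hε0 : 0 < min 1 (δ / (c + d + 1)) := lt_min one_pos (div_pos hδ hcd)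
  have hε1 : min 1 (δ / (c + d + 1)) ≤ 1 := min_le_left _ _
  have hε2 : min 1 (δ / (c + d + 1)) ≤ δ / (c + d + 1) := min_le_right _ _
  have h1 := h _ hε0
  have h3 : min 1 (δ / (c + d + 1)) * (c + d + 1) ≤ δ := by
    rw [← le_div_iff₀ hcd]; exact hε2
  nlinarith [h1, hε0, hε1, h3, mul_nonneg hε0.le hc, mul_nonneg hε0.le hd]

end Helpers

section Key

variable {κ : Type*} [Fintype κ] [DecidableEq κ]

/-- The key inequality: if the block matrix `[[E²⊗1, X],[X, 1⊗F²]]` is PSD with `X` symmetric,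
then the quadratic form of `X` is dominated by that of `E ⊗ F`. -/
private lemma key_ineq {E F : Matrix κ κ ℝ} (hE : E.PosSemidef) (hF : F.PosSemidef)
    {X : Matrix (κ × κ) (κ × κ) ℝ} (hX : X.IsHermitian)
    (hblock : (fromBlocks ((E * E) ⊗ₖ (1 : Matrix κ κ ℝ)) X X
      ((1 : Matrix κ κ ℝ) ⊗ₖ (F * F))).PosSemidef)
    (v : κ × κ → ℝ) :
    v ⬝ᵥ X *ᵥ v ≤ v ⬝ᵥ (E ⊗ₖ F) *ᵥ v := by
  -- reduce to the regularized statement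
  have main : ∀ ε : ℝ, 0 < ε →
      v ⬝ᵥ X *ᵥ v ≤ v ⬝ᵥ (((E + ε • 1) ⊗ₖ (F + ε • 1)) *ᵥ v) := by
    intro ε hε
    set Eε := E + ε • (1 : Matrix κ κ ℝ) with hEεdef
    set Fε := F + ε • (1 : Matrix κ κ ℝ) with hFεdef
    have hEε : Eε.PosDef := psd_add_smul_one_posDef hE hε
    have hFε : Fε.PosDef := psd_add_smul_one_posDef hF hε
    have hEεh : Eεᴴ = Eε := hEε.1.eq
    have hFεh : Fεᴴ = Fε := hFε.1.eq
    -- the regularized block matrix is PSD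
    have hEεsq : Eε * Eε = E * E + ((2 * ε) • E + (ε ^ 2) • (1 : Matrix κ κ ℝ)) := by
      rw [hEεdef]
      rw [add_mul, mul_add, mul_add, Matrix.smul_mul, Matrix.mul_smul, Matrix.smul_mul,
        Matrix.mul_smul, Matrix.mul_one, Matrix.one_mul]
      rw [Matrix.one_mul, smul_smul, two_mul, add_smul, pow_two]
      abel
    have hFεsq : Fε * Fε = F * F + ((2 * ε) • F + (ε ^ 2) • (1 : Matrix κ κ ℝ)) := by
      rw [hFεdef]
      rw [add_mul, mul_add, mul_add, Matrix.smul_mul, Matrix.mul_smul, Matrix.smul_mul,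
        Matrix.mul_smul, Matrix.mul_one, Matrix.one_mul]
      rw [Matrix.one_mul, smul_smul, two_mul, add_smul, pow_two]
      abel
    have hpert : ((2 * ε) • E + (ε ^ 2) • (1 : Matrix κ κ ℝ)).PosSemidef :=
      (psd_smul' _ (by linarith) hE).add (psd_smul' _ (by positivity) Matrix.PosSemidef.one)
    have hpertF : ((2 * ε) • F + (ε ^ 2) • (1 : Matrix κ κ ℝ)).PosSemidef :=
      (psd_smul' _ (by linarith) hF).add (psd_smul' _ (by positivity) Matrix.PosSemidef.one)
    have hblockε : (fromBlocks ((Eε * Eε) ⊗ₖ (1 : Matrix κ κ ℝ)) X X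
        ((1 : Matrix κ κ ℝ) ⊗ₖ (Fε * Fε))).PosSemidef := by
      have heq : fromBlocks ((Eε * Eε) ⊗ₖ (1 : Matrix κ κ ℝ)) X X
          ((1 : Matrix κ κ ℝ) ⊗ₖ (Fε * Fε)) =
          fromBlocks ((E * E) ⊗ₖ (1 : Matrix κ κ ℝ)) X X ((1 : Matrix κ κ ℝ) ⊗ₖ (F * F)) +
          fromBlocks (((2 * ε) • E + (ε ^ 2) • (1 : Matrix κ κ ℝ)) ⊗ₖ (1 : Matrix κ κ ℝ)) 0 0
            ((1 : Matrix κ κ ℝ) ⊗ₖ ((2 * ε) • F + (ε ^ 2) • (1 : Matrix κ κ ℝ))) := by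
        rw [fromBlocks_add, hEεsq, hFεsq, add_kronecker, kronecker_add]
        simp
      rw [heq]
      exact hblock.add (psd_fromBlocks_diag (psd_kron' hpert Matrix.PosSemidef.one)
        (psd_kron' Matrix.PosSemidef.one hpertF))
    -- Schur complement
    have hdetEε : IsUnit Eε.det := isUnit_iff_ne_zero.mpr hEε.det_pos.ne'
    have hPd : ((Eε * Eε) ⊗ₖ (1 : Matrix κ κ ℝ)).PosDef := by
      apply posDef_of_psd_isUnit
      · refine psd_kron' ?_ Matrix.PosSemidef.one
        have := posSemidef_conjTranspose_mul_self Eε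
        rwa [hEεh] at this
      · rw [det_kronecker, det_mul, det_one]
        simp only [one_pow, mul_one]
        exact (hdetEε.mul hdetEε).pow _
    haveI : Invertible ((Eε * Eε) ⊗ₖ (1 : Matrix κ κ ℝ)) :=
      invertibleOfIsUnitDet _ (by
        rw [det_kronecker, det_mul, det_one]
        simp only [one_pow, mul_one]
        exact (hdetEε.mul hdetEε).pow _)
    have hSchur : (((1 : Matrix κ κ ℝ) ⊗ₖ (Fε * Fε)) -
        Xᴴ * ((Eε * Eε) ⊗ₖ (1 : Matrix κ κ ℝ))⁻¹ * X).PosSemidef := by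
      refine (PosDef.fromBlocks₁₁ X _ hPd).mp ?_
      rw [hX.eq]
      exact hblockε
    -- conjugate by R = Eε⁻¹ ⊗ 1
    set R := Eε⁻¹ ⊗ₖ (1 : Matrix κ κ ℝ) with hRdef
    have hRh : Rᴴ = R := by
      rw [hRdef, kron_conjTranspose', conjTranspose_one, hEε.inv.1.eq]
    have hPinv : ((Eε * Eε) ⊗ₖ (1 : Matrix κ κ ℝ))⁻¹ = (Eε⁻¹ * Eε⁻¹) ⊗ₖ (1 : Matrix κ κ ℝ) := by
      rw [inv_kronecker, Matrix.mul_inv_rev, inv_one]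
    have hRR : R * R = ((Eε * Eε) ⊗ₖ (1 : Matrix κ κ ℝ))⁻¹ := by
      rw [hPinv, hRdef, ← mul_kronecker_mul, Matrix.one_mul]
    set H := Eε⁻¹ ⊗ₖ Fε with hHdef
    have hH : H.PosSemidef := psd_kron' hEε.inv.posSemidef hFε.posSemidef
    set W := R * X * R with hWdef
    have hW : W.IsHermitian := by
      unfold Matrix.IsHermitian
      rw [hWdef, conjTranspose_mul, conjTranspose_mul, hRh, hX.eq, mul_assoc]
    have hsq : (H * H - W * W).PosSemidef := by
      have e1 : R * ((1 : Matrix κ κ ℝ) ⊗ₖ (Fε * Fε)) * R = H * H := by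
        rw [hRdef, hHdef]
        simp only [← mul_kronecker_mul, Matrix.mul_one, Matrix.one_mul]
      have e2 : R * (Xᴴ * ((Eε * Eε) ⊗ₖ (1 : Matrix κ κ ℝ))⁻¹ * X) * R = W * W := by
        rw [hX.eq, ← hRR, hWdef]
        noncomm_ring
      have : H * H - W * W = Rᴴ * (((1 : Matrix κ κ ℝ) ⊗ₖ (Fε * Fε)) -
          Xᴴ * ((Eε * Eε) ⊗ₖ (1 : Matrix κ κ ℝ))⁻¹ * X) * R := by
        rw [hRh, Matrix.mul_sub, Matrix.sub_mul, e1, e2]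
      rw [this]
      exact hSchur.conjTranspose_mul_mul_same R
    have hHmW : (H - W).PosSemidef := psd_of_sq_le' hW hH hsq
    -- evaluate at w = (Eε ⊗ 1) v
    set G := Eε ⊗ₖ (1 : Matrix κ κ ℝ) with hGdef
    have hGt : Gᵀ = G := by
      have : Gᴴ = G := by rw [hGdef, kron_conjTranspose', conjTranspose_one, hEεh]
      rwa [conjTranspose_eq_transpose_of_trivial] at this
    have hGR : G * R = 1 := by
      rw [hGdef, hRdef, ← mul_kronecker_mul, Matrix.mul_one,
        mul_nonsing_inv Eε hdetEε, one_kronecker_one]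
    have hRG : R * G = 1 := by
      rw [hGdef, hRdef, ← mul_kronecker_mul, Matrix.mul_one,
        nonsing_inv_mul Eε hdetEε, one_kronecker_one]
    have hGWG : G * W * G = X := by
      rw [hWdef]
      calc G * (R * X * R) * G = (G * R) * X * (R * G) := by noncomm_ring
      _ = X := by rw [hGR, hRG, Matrix.one_mul, Matrix.mul_one]
    have hGHG : G * H * G = Eε ⊗ₖ Fε := by
      rw [hGdef, hHdef, ← mul_kronecker_mul, ← mul_kronecker_mul]
      rw [Matrix.mul_nonsing_inv _ hdetEε]
      simp
    have hquad := hHmW.dotProduct_mulVec_nonneg (G *ᵥ v)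
    simp only [star_trivial] at hquad
    rw [sub_mulVec, dotProduct_sub, conj_quadform G H hGt v, conj_quadform G W hGt v,
      hGWG, hGHG] at hquad
    linarith [hquad]
  -- now take ε → 0
  have expand : ∀ ε : ℝ, 0 < ε → v ⬝ᵥ (((E + ε • 1) ⊗ₖ (F + ε • 1)) *ᵥ v) =
      v ⬝ᵥ (E ⊗ₖ F) *ᵥ v + ε * (v ⬝ᵥ (E ⊗ₖ (1 : Matrix κ κ ℝ)) *ᵥ v
        + v ⬝ᵥ ((1 : Matrix κ κ ℝ) ⊗ₖ F) *ᵥ v) + ε ^ 2 * (v ⬝ᵥ v) := by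
    intro ε hε
    simp only [add_kronecker, kronecker_add, smul_kronecker, kronecker_smul,
      one_kronecker_one, add_mulVec, dotProduct_add, smul_mulVec, dotProduct_smul,
      one_mulVec, smul_eq_mul, smul_smul]
    ring
  apply eps_limit (c := v ⬝ᵥ (E ⊗ₖ (1 : Matrix κ κ ℝ)) *ᵥ v
      + v ⬝ᵥ ((1 : Matrix κ κ ℝ) ⊗ₖ F) *ᵥ v) (d := v ⬝ᵥ v)
  · have h1 := (psd_kron' hE Matrix.PosSemidef.one).dotProduct_mulVec_nonneg v
    have h2 := (psd_kron' Matrix.PosSemidef.one hF).dotProduct_mulVec_nonneg v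
    simp only [star_trivial] at h1 h2
    linarith
  · have := dotProduct_star_self_nonneg v
    simpa using this
  · intro ε hε
    rw [← expand ε hε]
    exact main ε hε

end Key


section Helpers2

variable {κ : Type*} [Fintype κ] [DecidableEq κ]


private lemma kron_conjTranspose'' (A : Matrix κ κ ℝ) (B : Matrix κ κ ℝ) :
    (A ⊗ₖ B)ᴴ = Aᴴ ⊗ₖ Bᴴ := by
  ext ⟨i,j⟩ ⟨p,q⟩
  simp [conjTranspose_apply, kroneckerMap_apply]

/-- quadratic form of a Kronecker product at the "vectorized identity" vector -/
private lemma quad_diag (A B : Matrix κ κ ℝ) :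
    (fun p : κ × κ => if p.1 = p.2 then (1:ℝ) else 0) ⬝ᵥ
      (A ⊗ₖ B) *ᵥ (fun p : κ × κ => if p.1 = p.2 then (1:ℝ) else 0) =
    ∑ i, ∑ j, A i j * B i j := by
  simp only [dotProduct, mulVec, kroneckerMap_apply, Fintype.sum_prod_type]
  simp [dotProduct, mul_ite, ite_mul, mul_zero, zero_mul, Finset.sum_ite_eq,
    Finset.sum_ite_eq', mul_comm]

/-- the basic PSD block matrix -/
private lemma block_psd {E F : Matrix κ κ ℝ} (hE : E.IsHermitian) (hF : F.IsHermitian) :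
    (fromBlocks ((E * E) ⊗ₖ (1 : Matrix κ κ ℝ)) (E ⊗ₖ F) (E ⊗ₖ F)
      ((1 : Matrix κ κ ℝ) ⊗ₖ (F * F))).PosSemidef := by
  set Z := fromBlocks (E ⊗ₖ (1 : Matrix κ κ ℝ)) ((1 : Matrix κ κ ℝ) ⊗ₖ F)
      (0 : Matrix (κ × κ) (κ × κ) ℝ) 0 with hZ
  have : fromBlocks ((E * E) ⊗ₖ (1 : Matrix κ κ ℝ)) (E ⊗ₖ F) (E ⊗ₖ F)
      ((1 : Matrix κ κ ℝ) ⊗ₖ (F * F)) = Zᴴ * Z := by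
    rw [hZ, fromBlocks_conjTranspose, fromBlocks_multiply]
    simp only [conjTranspose_zero, kron_conjTranspose'', conjTranspose_one, hE.eq, hF.eq,
      Matrix.mul_zero, Matrix.zero_mul, add_zero, zero_add, ← mul_kronecker_mul,
      Matrix.mul_one, Matrix.one_mul]
  rw [this]
  exact posSemidef_conjTranspose_mul_self Z


end Helpers2

private lemma frob_expand {k : ℕ} {A B : Matrix (Fin k) (Fin k) ℝ}
    (hA : A.PosSemidef) (hB : B.PosSemidef) :
    frobSq (hA.sqrt - hB.sqrt) =
      (∑ i, A i i) + (∑ i, B i i) - 2 * ∑ i, ∑ j, hA.sqrt i j * hB.sqrt i j := by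
  set E := hA.sqrt with hEdef
  set F := hB.sqrt with hFdef
  have hsymE : ∀ i j, E j i = E i j := by
    intro i j
    conv_lhs => rw [hEdef, ← hA.posSemidef_sqrt.1.eq]
    simp [conjTranspose_apply, hEdef]
  have hsymF : ∀ i j, F j i = F i j := by
    intro i j
    conv_lhs => rw [hFdef, ← hB.posSemidef_sqrt.1.eq]
    simp [conjTranspose_apply, hFdef]
  have hEE : ∀ i, ∑ j, E i j * E i j = A i i := by
    intro i
    have : (E * E) i i = A i i := by rw [hA.sqrt_mul_self]
    rw [← this, mul_apply]
    exact Finset.sum_congr rfl fun j _ => by rw [hsymE i j]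
  have hFF : ∀ i, ∑ j, F i j * F i j = B i i := by
    intro i
    have : (F * F) i i = B i i := by rw [hB.sqrt_mul_self]
    rw [← this, mul_apply]
    exact Finset.sum_congr rfl fun j _ => by rw [hsymF i j]
  unfold frobSq
  have : ∀ i, ∑ j, ((E - F) i j) ^ 2
      = (∑ j, E i j * E i j) + (∑ j, F i j * F i j) - 2 * ∑ j, E i j * F i j := by
    intro i
    rw [Finset.mul_sum, ← Finset.sum_add_distrib, ← Finset.sum_sub_distrib]
    exact Finset.sum_congr rfl fun j _ => by simp [Matrix.sub_apply]; ring
  calc ∑ i, ∑ j, ((E - F) i j) ^ 2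
      = ∑ i, ((∑ j, E i j * E i j) + (∑ j, F i j * F i j) - 2 * ∑ j, E i j * F i j) :=
        Finset.sum_congr rfl fun i _ => this i
    _ = (∑ i, A i i) + (∑ i, B i i) - 2 * ∑ i, ∑ j, E i j * F i j := by
        rw [Finset.mul_sum, ← Finset.sum_add_distrib, ← Finset.sum_sub_distrib]
        exact Finset.sum_congr rfl fun i _ => by rw [hEE i, hFF i]


/-- (M,N) ↦ Tr[(√M − √N)²] = |√M − √N|_F² is jointly convex on pairs
of positive semidefinite matrices. -/
theorem sqrt_diff_frobenius_jointly_convex {k : ℕ}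
    {M₁ N₁ M₂ N₂ : Matrix (Fin k) (Fin k) ℝ}
    (hM₁ : M₁.PosSemidef) (hN₁ : N₁.PosSemidef) (hM₂ : M₂.PosSemidef) (hN₂ : N₂.PosSemidef)
    (t : ℝ) (ht0 : 0 ≤ t) (ht1 : t ≤ 1)
    (hM : (t • M₁ + (1 - t) • M₂).PosSemidef) (hN : (t • N₁ + (1 - t) • N₂).PosSemidef) :
    frobSq (hM.sqrt - hN.sqrt)
      ≤ t * frobSq (hM₁.sqrt - hN₁.sqrt) + (1 - t) * frobSq (hM₂.sqrt - hN₂.sqrt) := by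
  classical
  have h1t : (0:ℝ) ≤ 1 - t := by linarith
  set E₁ := hM₁.sqrt with hE₁def
  set F₁ := hN₁.sqrt with hF₁def
  set E₂ := hM₂.sqrt with hE₂def
  set F₂ := hN₂.sqrt with hF₂def
  set E := hM.sqrt with hEdef
  set F := hN.sqrt with hFdef
  have hE₁ := hM₁.posSemidef_sqrt
  have hF₁ := hN₁.posSemidef_sqrt
  have hE₂ := hM₂.posSemidef_sqrt
  have hF₂ := hN₂.posSemidef_sqrt
  have hEp := hM.posSemidef_sqrt
  have hFp := hN.posSemidef_sqrt
  set X := t • (E₁ ⊗ₖ F₁) + (1 - t) • (E₂ ⊗ₖ F₂) with hXdef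
  have hXpsd : X.PosSemidef :=
    (psd_smul' t ht0 (psd_kron' hE₁ hF₁)).add (psd_smul' _ h1t (psd_kron' hE₂ hF₂))
  have hblock : (fromBlocks ((E * E) ⊗ₖ (1 : Matrix (Fin k) (Fin k) ℝ)) X X
      ((1 : Matrix (Fin k) (Fin k) ℝ) ⊗ₖ (F * F))).PosSemidef := by
    have h11 : E * E = t • M₁ + (1 - t) • M₂ := hM.sqrt_mul_self
    have h22 : F * F = t • N₁ + (1 - t) • N₂ := hN.sqrt_mul_self
    have hb11 : (E * E) ⊗ₖ (1 : Matrix (Fin k) (Fin k) ℝ)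
        = t • (M₁ ⊗ₖ (1 : Matrix (Fin k) (Fin k) ℝ))
          + (1 - t) • (M₂ ⊗ₖ (1 : Matrix (Fin k) (Fin k) ℝ)) := by
      rw [h11, add_kronecker, smul_kronecker, smul_kronecker]
    have hb22 : (1 : Matrix (Fin k) (Fin k) ℝ) ⊗ₖ (F * F)
        = t • ((1 : Matrix (Fin k) (Fin k) ℝ) ⊗ₖ N₁)
          + (1 - t) • ((1 : Matrix (Fin k) (Fin k) ℝ) ⊗ₖ N₂) := by
      rw [h22, kronecker_add, kronecker_smul, kronecker_smul]
    have heq : fromBlocks ((E * E) ⊗ₖ (1 : Matrix (Fin k) (Fin k) ℝ)) X X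
        ((1 : Matrix (Fin k) (Fin k) ℝ) ⊗ₖ (F * F)) =
        t • fromBlocks (M₁ ⊗ₖ (1 : Matrix (Fin k) (Fin k) ℝ)) (E₁ ⊗ₖ F₁) (E₁ ⊗ₖ F₁)
          ((1 : Matrix (Fin k) (Fin k) ℝ) ⊗ₖ N₁) +
        (1 - t) • fromBlocks (M₂ ⊗ₖ (1 : Matrix (Fin k) (Fin k) ℝ)) (E₂ ⊗ₖ F₂) (E₂ ⊗ₖ F₂)
          ((1 : Matrix (Fin k) (Fin k) ℝ) ⊗ₖ N₂) := by
      rw [fromBlocks_smul, fromBlocks_smul, fromBlocks_add, hb11, hb22, hXdef]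
    rw [heq]
    have hb1 := block_psd hE₁.1 hF₁.1
    rw [hM₁.sqrt_mul_self, hN₁.sqrt_mul_self] at hb1
    have hb2 := block_psd hE₂.1 hF₂.1
    rw [hM₂.sqrt_mul_self, hN₂.sqrt_mul_self] at hb2
    exact (psd_smul' t ht0 hb1).add (psd_smul' _ h1t hb2)
  set vd : Fin k × Fin k → ℝ := fun p => if p.1 = p.2 then 1 else 0 with hvd
  have hkey := key_ineq hEp hFp hXpsd.1 hblock vd
  have hXquad : vd ⬝ᵥ X *ᵥ vd = t * (∑ i, ∑ j, E₁ i j * F₁ i j)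
      + (1 - t) * (∑ i, ∑ j, E₂ i j * F₂ i j) := by
    rw [hXdef, add_mulVec, dotProduct_add, smul_mulVec, smul_mulVec,
      dotProduct_smul, dotProduct_smul, hvd, quad_diag, quad_diag, smul_eq_mul, smul_eq_mul]
  have hEFquad : vd ⬝ᵥ (E ⊗ₖ F) *ᵥ vd = ∑ i, ∑ j, E i j * F i j := by
    rw [hvd, quad_diag]
  rw [hXquad, hEFquad] at hkey
  have hTrC : ∑ i, (t • M₁ + (1 - t) • M₂) i i
      = t * ∑ i, M₁ i i + (1 - t) * ∑ i, M₂ i i := by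
    rw [Finset.mul_sum, Finset.mul_sum, ← Finset.sum_add_distrib]
    exact Finset.sum_congr rfl fun i _ => by simp [Matrix.add_apply, Matrix.smul_apply]
  have hTrD : ∑ i, (t • N₁ + (1 - t) • N₂) i i
      = t * ∑ i, N₁ i i + (1 - t) * ∑ i, N₂ i i := by
    rw [Finset.mul_sum, Finset.mul_sum, ← Finset.sum_add_distrib]
    exact Finset.sum_congr rfl fun i _ => by simp [Matrix.add_apply, Matrix.smul_apply]
  rw [frob_expand hM hN, frob_expand hM₁ hN₁, frob_expand hM₂ hN₂, hTrC, hTrD]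
  linarith [hkey]
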